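/- For a Witt vector a over a ℤ_(p)-algebra A and an element α ∈ A, the Artin–Hasse exponential satisfies E(τ(α)·a)(x) = E(a)(αx), where τ(α) is the Teichmüller lift of α and E is the Artin–Hasse map. -/

import Mathlib

open PowerSeries

/-- Formal composition `f ∘ g` of power series (valid when `g` has zero constant term):
the `k`-th coefficient is that of `∑_{j ≤ k} f_j g^j`. -/
noncomputable def psComp {R : Type*} [CommRing R] (f g : PowerSeries R) : PowerSeries R :=
  PowerSeries.mk fun k =>
    PowerSeries.coeff k (∑ j ∈ Finset.range (k + 1), PowerSeries.C (PowerSeries.coeff j f) * g ^ j)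

/-- The ring `ℤ_(p) = ℤ_p ∩ ℚ`, realized as a subring of `ℚ`. -/
noncomputable def ZpRat (p : ℕ) [Fact p.Prime] : Subring ℚ :=
  (PadicInt.subring p).comap (Rat.castHom ℚ_[p])

open scoped Classical

/-- The series `∑_{n ≥ 0} x^{pⁿ}/pⁿ` over `ℚ` (its coefficient at `k = pⁿ` is `1/k`). -/
noncomputable def ahLog (p : ℕ) : PowerSeries ℚ :=
  PowerSeries.mk fun k => if ∃ n : ℕ, k = p ^ n then (1 : ℚ) / k else 0

/-- The Artin–Hasse exponential of a Witt vector `a` over a `ℤ_(p)`-algebra `A`: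
`E(a) = ∏_{i ≥ 0} AH(aᵢ x^{pⁱ})`.  (The `k`-th coefficient of the infinite product is
that of the finite product of the factors with `i ≤ k`, the remaining factors being
`≡ 1 mod x^{k+1}`.) -/
noncomputable def artinHasseExp {p : ℕ} [Fact p.Prime] {A : Type*} [CommRing A]
    [Algebra (ZpRat p) A] (AH : PowerSeries (ZpRat p)) (a : WittVector p A) :
    PowerSeries A :=
  PowerSeries.mk fun k => PowerSeries.coeff k
    (∏ i ∈ Finset.range (k + 1),
      psComp (PowerSeries.map (algebraMap (ZpRat p) A) AH)
        (PowerSeries.C (a.coeff i) * PowerSeries.X ^ p ^ i))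

/-! ### Auxiliary lemmas on Witt vectors -/

/-- Ghost components of the "diagonal scaling" of a Witt vector. -/
private theorem ghost_scale {p : ℕ} [hp : Fact p.Prime] {R : Type*} [CommRing R]
    (α : R) (a : WittVector p R) (n : ℕ) :
    WittVector.ghostComponent n (WittVector.mk p fun i => α ^ p ^ i * a.coeff i) =
      α ^ p ^ n * WittVector.ghostComponent n a := by
  simp only [WittVector.ghostComponent_apply, aeval_wittPolynomial]
  rw [Finset.mul_sum]
  refine Finset.sum_congr rfl fun i hi => ?_
  rw [Finset.mem_range, Nat.lt_succ_iff] at hi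
  have : (α ^ p ^ i * a.coeff i) ^ p ^ (n - i) = α ^ p ^ n * a.coeff i ^ p ^ (n - i) := by
    rw [mul_pow, ← pow_mul, ← pow_add, Nat.add_sub_cancel' hi]
  rw [WittVector.coeff_mk, this]; ring

private theorem teich_mul_aux {p : ℕ} [hp : Fact p.Prime] {σ : Type*}
    (α : MvPolynomial σ ℚ) (a : WittVector p (MvPolynomial σ ℚ)) :
    WittVector.teichmuller p α * a = WittVector.mk p fun i => α ^ p ^ i * a.coeff i := by
  apply (WittVector.ghostMap.bijective_of_invertible p (MvPolynomial σ ℚ)).1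
  funext n
  simp only [WittVector.ghostMap_apply, map_mul, ghost_scale,
    WittVector.ghostComponent_teichmuller]

/-- The `n`-th coefficient of `τ(α) · a` is `α ^ pⁿ · aₙ`. -/
theorem teichmuller_mul_coeff {p : ℕ} [hp : Fact p.Prime] {R : Type*} [CommRing R]
    (α : R) (a : WittVector p R) (n : ℕ) :
    (WittVector.teichmuller p α * a).coeff n = α ^ p ^ n * a.coeff n := by
  -- reduce to the universal case over `MvPolynomial (Unit ⊕ ℕ) ℤ`
  let f : MvPolynomial (Unit ⊕ ℕ) ℤ →+* R :=
    (MvPolynomial.aeval (Sum.elim (fun _ => α) fun i => a.coeff i)).toRingHom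
  let αu : MvPolynomial (Unit ⊕ ℕ) ℤ := MvPolynomial.X (Sum.inl ())
  let au : WittVector p (MvPolynomial (Unit ⊕ ℕ) ℤ) :=
    WittVector.mk p fun i => MvPolynomial.X (Sum.inr i)
  have key : (WittVector.teichmuller p αu * au).coeff n = αu ^ p ^ n * au.coeff n := by
    have hinj : Function.Injective
        (MvPolynomial.map (Int.castRingHom ℚ) :
          MvPolynomial (Unit ⊕ ℕ) ℤ → MvPolynomial (Unit ⊕ ℕ) ℚ) :=
      MvPolynomial.map_injective _ Int.cast_injective
    apply hinj
    have := congrArg (fun x => WittVector.coeff x n)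
      (teich_mul_aux (p := p) (σ := Unit ⊕ ℕ) (MvPolynomial.map (Int.castRingHom ℚ) αu)
        (WittVector.map (MvPolynomial.map (Int.castRingHom ℚ)) au))
    simp only [WittVector.coeff_mk, WittVector.map_coeff] at this
    rw [← WittVector.map_teichmuller, ← map_mul] at this
    rw [WittVector.map_coeff] at this
    rw [this, map_mul, map_pow]
  have hα : f αu = α := by simp [f, αu]
  have ha : WittVector.map f au = a := by
    ext i; simp [au, f, WittVector.map_coeff, WittVector.coeff_mk]
  have h2 : (WittVector.teichmuller p (f αu) * WittVector.map f au).coeff n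
      = (f αu) ^ p ^ n * (WittVector.map f au).coeff n := by
    rw [WittVector.map_coeff, ← WittVector.map_teichmuller, ← map_mul, WittVector.map_coeff, key,
      map_mul, map_pow]
  rwa [hα, ha] at h2

/-! ### Auxiliary lemmas on power series -/

theorem psComp_C_mul_X {R : Type*} [CommRing R] (f : PowerSeries R) (α : R) :
    psComp f (PowerSeries.C α * PowerSeries.X) = PowerSeries.rescale α f := by
  ext k
  simp only [psComp, coeff_mk, coeff_rescale, map_sum, mul_pow, ← map_pow, ← map_mul,
    PowerSeries.coeff_C_mul, PowerSeries.coeff_X_pow]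
  rw [Finset.sum_eq_single k]
  · simp [mul_comm]
  · intro j _ hj
    simp [Ne.symm hj]
  · intro h
    exact absurd (Finset.self_mem_range_succ k) h

theorem rescale_psComp {R : Type*} [CommRing R] (f : PowerSeries R) (c α : R) (m : ℕ) :
    PowerSeries.rescale α (psComp f (PowerSeries.C c * PowerSeries.X ^ m)) =
      psComp f (PowerSeries.C (α ^ m * c) * PowerSeries.X ^ m) := by
  ext k
  simp only [psComp, coeff_mk, coeff_rescale, map_sum, Finset.mul_sum, mul_pow, ← pow_mul,
    ← map_pow, PowerSeries.coeff_C_mul, PowerSeries.coeff_X_pow]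
  refine Finset.sum_congr rfl fun j hj => ?_
  split_ifs with h
  · subst h
    ring
  · simp

/-- For a Witt vector `a` over a `ℤ_(p)`-algebra `A` and `α ∈ A`, the Artin–Hasse
exponential satisfies `E(τ(α)·a)(x) = E(a)(αx)`. -/
theorem artinHasseExp_teichmuller_smul (p : ℕ) [Fact p.Prime] (A : Type*) [CommRing A]
    [Algebra (ZpRat p) A] (AH : PowerSeries (ZpRat p))
    (hAH : PowerSeries.map (ZpRat p).subtype AH = psComp (PowerSeries.exp ℚ) (ahLog p))
    (a : WittVector p A) (α : A) :
    artinHasseExp AH (WittVector.teichmuller p α * a) =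
      psComp (artinHasseExp AH a) (PowerSeries.C α * PowerSeries.X) := by
  rw [psComp_C_mul_X]
  ext k
  have h1 : (PowerSeries.coeff k) (PowerSeries.rescale α (artinHasseExp AH a))
      = (PowerSeries.coeff k) (PowerSeries.rescale α
          (∏ i ∈ Finset.range (k + 1),
            psComp (PowerSeries.map (algebraMap (ZpRat p) A) AH)
              (PowerSeries.C (a.coeff i) * PowerSeries.X ^ p ^ i))) := by
    rw [coeff_rescale, coeff_rescale, artinHasseExp, coeff_mk]
  rw [h1, map_prod]
  simp only [rescale_psComp]
  simp only [artinHasseExp, coeff_mk, teichmuller_mul_coeff]
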